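/- For every natural number N there exists a finite connected bichromatic graph that is locally like W(F₄) and has more than N vertices; in particular, there exist infinitely many pairwise non-isomorphic finite connected bichromatic graphs that are locally like W(F₄). -/

import Mathlib

/-- The underlying simple graph of the bichromatic graph `W(B₃)` (equivalently of `W(C₃)`):
vertices the ordered pairs `(i,j) ∈ {1,2,3} × {1,2,3}`, distinct vertices `(i,j)` and `(k,l)`
being adjacent iff `{i,j} ∩ {k,l} = ∅` or `(k,l) = (j,i)`. -/
def graphB3 : SimpleGraph (Fin 3 × Fin 3) :=
  SimpleGraph.fromRel fun a b =>
    ({a.1, a.2} : Finset (Fin 3)) ∩ {b.1, b.2} = ∅ ∨ b = (a.2, a.1)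

/-- The labeling of `W(B₃)`: the vertex `(i,j)` is short (label `true`) iff `i = j`.
In `W(C₃)` the labels are interchanged. -/
def labelB3 (a : Fin 3 × Fin 3) : Bool := a.1 = a.2

/-- A bichromatic graph `(Γ, lab)` (where `lab v = true` means `v` is short and
`lab v = false` means `v` is long) is *locally like `W(F₄)`* if the neighborhood of every
short vertex, with its induced labeling, is isomorphic as a bichromatic graph to `W(B₃)`,
and the neighborhood of every long vertex is isomorphic as a bichromatic graph to `W(C₃)`. -/
def IsLocallyLikeWF4 {V : Type*} (Γ : SimpleGraph V) (lab : V → Bool) : Prop :=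
  (∀ x : V, lab x = true →
      ∃ e : Γ.induce (Γ.neighborSet x) ≃g graphB3,
        ∀ u : Γ.neighborSet x, lab u.1 = labelB3 (e u)) ∧
  (∀ x : V, lab x = false →
      ∃ e : Γ.induce (Γ.neighborSet x) ≃g graphB3,
        ∀ u : Γ.neighborSet x, lab u.1 = !labelB3 (e u))


section Construction
set_option maxHeartbeats 4000000


open SimpleGraph

def A0 : Fin 24 → Fin 24 → Bool :=
  ![![false, true, true, true, false, false, false, false, false, false, true, true, true, true, true, true, false, false, false, false, false, false, false, false], ![true, false, true, true, false, false, true, true, true, true, false, false, false, false, true, true, false, false, false, false, false, false, false, false], ![true, true, false, true, true, true, false, false, true, true, false, false, true, true, false, false, false, false, false, false, false, false, false, false], ![true, true, true, false, true, true, true, true, false, false, true, true, false, false, false, false, false, false, false, false, false, false, false, false], ![false, false, true, true, false, true, false, false, false, false, false, false, false, false, true, true, false, false, false, false, true, true, true, true], ![false, false, true, true, true, false, false, false, false, false, false, false, false, false, true, true, true, true, true, true, false, false, false, false], ![false, true, false, true, false, false, false, true, false, false, false, false, true, true, false, false, false, false, true, true, false, false, true, true], ![false, true, false, true, false, false, true,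 false, false, false, false, false, true, true, false, false, true, true, false, false, true, true, false, false], ![false, true, true, false, false, false, false, false, false, true, true, true, false, false, false, false, false, true, false, true, false, true, false, true], ![false, true, true, false, false, false, false, false, true, false, true, true, false, false, false, false, true, false, true, false, true, false, true, false], ![true, false, false, true, false, false, false, false, true, true, false, true, false, false, false, false, false, false, true, true, true, true, false, false], ![true, false, false, true, false, false, false, false, true, true, true, false, false, false, false, false, true, true, false, false, false, false, true, true], ![true, false, true, false, false, false, true, true, false, false, false, false, false, true, false, false, false, true, false, true, true, false, true, false], ![true, false, true, false, false, false, true, true, false, false, false, false, true, false, false, false, true, false, true, false, false, true, false, true], ![true, true, false, false, true, true, false, false, false, false, false, false, false, false, false, true, false, true, true, false, false, true, true, false], ![true, true, false, false, true, true, false, false, false, false, false, false, false, false, true, false, true, false, false, true, true, false, false, true], ![false, false, false, false, false, true, false, true, false, true, false, true, false, true, false, true, false, false, false, true, false, true, true, false], ![false, false, false, false, false, true, false, true, true, false, false, true, true, false, true, false, false, false, true, false, true, false, false, true], ![false, false, false, false, false, true, true, false, false, true, true, false, false, true, true, false, false, true, false, false, true, false, false, true], ![false, false, false, false, false, true, true,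 false, true, false, true, false, true, false, false, true, true, false, false, false, false, true, true, false], ![false, false, false, false, true, false, false, true, false, true, true, false, true, false, false, true, false, true, true, false, false, false, false, true], ![false, false, false, false, true, false, false, true, true, false, true, false, false, true, true, false, true, false, false, true, false, false, true, false], ![false, false, false, false, true, false, true, false, false, true, false, true, true, false, true, false, true, false, false, true, false, true, false, false], ![false, false, false, false, true, false, true, false, true, false, false, true, false, true, false, true, false, true, true, false, true, false, false, false]]

def lab0 : Fin 24 → Bool :=
  ![true, true, true, true, false, false, false, false, false, false, false, false, false, false, false, false, true, true, true, true, true, true, true, true]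

def g0 : Fin 24 → Fin 24 → ℤ :=
  ![![0, 0, 1, 1, 0, 0, 0, 0, 0, 0, 1, 1, 1, 1, 0, 0, 0, 0, 0, 0, 0, 0, 0, 0], ![0, 0, 1, 1, 0, 0, 1, 1, 1, 1, 0, 0, 0, 0, 0, 0, 0, 0, 0, 0, 0, 0, 0, 0], ![(-1), (-1), 0, 0, 0, 0, 0, 0, 0, 0, 0, 0, 0, 0, 0, 0, 0, 0, 0, 0, 0, 0, 0, 0], ![(-1), (-1), 0, 0, 0, 0, 0, 0, 0, 0, 0, 0, 0, 0, 0, 0, 0, 0, 0, 0, 0, 0, 0, 0], ![0, 0, 0, 0, 0, 0, 0, 0, 0, 0, 0, 0, 0, 0, 0, 0, 0, 0, 0, 0, 0, 0, 0, 0], ![0, 0, 0, 0, 0, 0, 0, 0, 0, 0, 0, 0, 0, 0, 0, 0, 0, 0, 0, 0, 0, 0, 0, 0], ![0, (-1), 0, 0, 0, 0, 0, 0, 0, 0, 0, 0, 0, 0, 0, 0, 0, 0, 0, 0, 0, 0, 0, 0], ![0, (-1), 0, 0, 0, 0, 0, 0, 0, 0, 0, 0, 0, 0, 0, 0, 0,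 0, 0, 0, 0, 0, 0, 0], ![0, (-1), 0, 0, 0, 0, 0, 0, 0, 0, 0, 0, 0, 0, 0, 0, 0, 0, 0, 0, 0, 0, 0, 0], ![0, (-1), 0, 0, 0, 0, 0, 0, 0, 0, 0, 0, 0, 0, 0, 0, 0, 0, 0, 0, 0, 0, 0, 0], ![(-1), 0, 0, 0, 0, 0, 0, 0, 0, 0, 0, 0, 0, 0, 0, 0, 0, 0, 0, 0, 0, 0, 0, 0], ![(-1), 0, 0, 0, 0, 0, 0, 0, 0, 0, 0, 0, 0, 0, 0, 0, 0, 0, 0, 0, 0, 0, 0, 0], ![(-1), 0, 0, 0, 0, 0, 0, 0, 0, 0, 0, 0, 0, 0, 0, 0, 0, 0, 0, 0, 0, 0, 0, 0], ![(-1), 0, 0, 0, 0, 0, 0, 0, 0, 0, 0, 0, 0, 0, 0, 0, 0, 0, 0, 0, 0, 0, 0, 0], ![0, 0, 0, 0, 0, 0, 0, 0, 0, 0, 0, 0, 0, 0, 0, 0, 0, 0, 0, 0, 0, 0, 0, 0], ![0, 0, 0, 0, 0, 0, 0, 0, 0, 0, 0, 0, 0, 0, 0, 0, 0, 0, 0,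 0, 0, 0, 0, 0], ![0, 0, 0, 0, 0, 0, 0, 0, 0, 0, 0, 0, 0, 0, 0, 0, 0, 0, 0, 0, 0, 0, 0, 0], ![0, 0, 0, 0, 0, 0, 0, 0, 0, 0, 0, 0, 0, 0, 0, 0, 0, 0, 0, 0, 0, 0, 0, 0], ![0, 0, 0, 0, 0, 0, 0, 0, 0, 0, 0, 0, 0, 0, 0, 0, 0, 0, 0, 0, 0, 0, 0, 0], ![0, 0, 0, 0, 0, 0, 0, 0, 0, 0, 0, 0, 0, 0, 0, 0, 0, 0, 0, 0, 0, 0, 0, 0], ![0, 0, 0, 0, 0, 0, 0, 0, 0, 0, 0, 0, 0, 0, 0, 0, 0, 0, 0, 0, 0, 0, 0, 0], ![0, 0, 0, 0, 0, 0, 0, 0, 0, 0, 0, 0, 0, 0, 0, 0, 0, 0, 0, 0, 0, 0, 0, 0], ![0, 0, 0, 0, 0, 0, 0, 0, 0, 0, 0, 0, 0, 0, 0, 0, 0, 0, 0, 0, 0, 0, 0, 0], ![0, 0, 0, 0, 0, 0, 0, 0, 0, 0, 0, 0, 0, 0, 0, 0, 0, 0, 0, 0, 0, 0, 0, 0]]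

def E0 : Fin 24 → Fin 24 → Fin 3 × Fin 3 :=
  ![![(0,0), (0,0), (1,1), (2,2), (0,0), (0,0), (0,0), (0,0), (0,0), (0,0), (0,1), (1,0), (0,2), (2,0), (1,2), (2,1), (0,0), (0,0), (0,0), (0,0), (0,0), (0,0), (0,0), (0,0)], ![(0,0), (0,0), (1,1), (2,2), (0,0), (0,0), (0,1), (1,0), (0,2), (2,0), (0,0), (0,0), (0,0), (0,0), (1,2), (2,1), (0,0), (0,0), (0,0), (0,0), (0,0), (0,0), (0,0), (0,0)], ![(0,0), (1,1), (0,0), (2,2), (0,1), (1,0), (0,0), (0,0), (0,2), (2,0), (0,0), (0,0), (1,2), (2,1), (0,0), (0,0), (0,0), (0,0), (0,0), (0,0), (0,0), (0,0), (0,0), (0,0)], ![(0,0), (1,1), (2,2), (0,0), (0,1), (1,0), (0,2), (2,0), (0,0), (0,0), (1,2), (2,1), (0,0), (0,0), (0,0), (0,0), (0,0), (0,0), (0,0), (0,0), (0,0), (0,0), (0,0), (0,0)], ![(0,0), (0,0), (0,1), (1,0), (0,0), (2,2), (0,0), (0,0), (0,0), (0,0), (0,0), (0,0), (0,0), (0,0),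 (0,0), (1,1), (0,0), (0,0), (0,0), (0,0), (0,2), (1,2), (2,1), (2,0)], ![(0,0), (0,0), (0,1), (1,0), (2,2), (0,0), (0,0), (0,0), (0,0), (0,0), (0,0), (0,0), (0,0), (0,0), (0,0), (1,1), (0,2), (1,2), (2,1), (2,0), (0,0), (0,0), (0,0), (0,0)], ![(0,0), (0,1), (0,0), (1,0), (0,0), (0,0), (0,0), (2,2), (0,0), (0,0), (0,0), (0,0), (0,0), (1,1), (0,0), (0,0), (0,0), (0,0), (0,2), (1,2), (0,0), (0,0), (2,1), (2,0)], ![(0,0), (0,1), (0,0), (1,0), (0,0), (0,0), (2,2), (0,0), (0,0), (0,0), (0,0), (0,0), (0,0), (1,1), (0,0), (0,0), (0,2), (1,2), (0,0), (0,0), (2,1), (2,0), (0,0), (0,0)], ![(0,0), (0,1), (1,0), (0,0), (0,0), (0,0), (0,0), (0,0), (0,0), (2,2), (0,0), (1,1), (0,0), (0,0), (0,0), (0,0), (0,0), (0,2), (0,0), (1,2), (0,0), (2,1), (0,0), (2,0)], ![(0,0), (0,1), (1,0), (0,0), (0,0), (0,0), (0,0), (0,0), (2,2), (0,0), (0,0),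 (1,1), (0,0), (0,0), (0,0), (0,0), (0,2), (0,0), (1,2), (0,0), (2,1), (0,0), (2,0), (0,0)], ![(0,1), (0,0), (0,0), (1,0), (0,0), (0,0), (0,0), (0,0), (0,0), (1,1), (0,0), (2,2), (0,0), (0,0), (0,0), (0,0), (0,0), (0,0), (0,2), (1,2), (2,0), (2,1), (0,0), (0,0)], ![(0,1), (0,0), (0,0), (1,0), (0,0), (0,0), (0,0), (0,0), (0,0), (1,1), (2,2), (0,0), (0,0), (0,0), (0,0), (0,0), (0,2), (1,2), (0,0), (0,0), (0,0), (0,0), (2,0), (2,1)], ![(0,1), (0,0), (1,0), (0,0), (0,0), (0,0), (0,0), (1,1), (0,0), (0,0), (0,0), (0,0), (0,0), (2,2), (0,0), (0,0), (0,0), (0,2), (0,0), (1,2), (2,0), (0,0), (2,1), (0,0)], ![(0,1), (0,0), (1,0), (0,0), (0,0), (0,0), (0,0), (1,1), (0,0), (0,0), (0,0), (0,0), (2,2), (0,0), (0,0), (0,0), (0,2), (0,0), (1,2), (0,0), (0,0), (2,0), (0,0), (2,1)], ![(0,1), (1,0), (0,0), (0,0), (0,0), (1,1), (0,0), (0,0),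 (0,0), (0,0), (0,0), (0,0), (0,0), (0,0), (0,0), (2,2), (0,0), (0,2), (2,0), (0,0), (0,0), (1,2), (2,1), (0,0)], ![(0,1), (1,0), (0,0), (0,0), (0,0), (1,1), (0,0), (0,0), (0,0), (0,0), (0,0), (0,0), (0,0), (0,0), (2,2), (0,0), (0,2), (0,0), (0,0), (2,0), (1,2), (0,0), (0,0), (2,1)], ![(0,0), (0,0), (0,0), (0,0), (0,0), (0,1), (0,0), (0,2), (0,0), (1,2), (0,0), (2,1), (0,0), (2,0), (0,0), (1,0), (0,0), (0,0), (0,0), (2,2), (0,0), (1,1), (0,0), (0,0)], ![(0,0), (0,0), (0,0), (0,0), (0,0), (0,1), (0,0), (0,2), (1,2), (0,0), (0,0), (2,1), (2,0), (0,0), (1,0), (0,0), (0,0), (0,0), (2,2), (0,0), (1,1), (0,0), (0,0), (0,0)], ![(0,0), (0,0), (0,0), (0,0), (0,0), (0,1), (0,2), (0,0), (0,0), (1,2), (2,1), (0,0), (0,0), (2,0), (1,0), (0,0), (0,0), (2,2), (0,0), (0,0), (0,0), (0,0), (0,0), (1,1)], ![(0,0), (0,0), (0,0), (0,0), (0,0),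 (0,1), (0,2), (0,0), (1,2), (0,0), (2,1), (0,0), (2,0), (0,0), (0,0), (1,0), (2,2), (0,0), (0,0), (0,0), (0,0), (0,0), (1,1), (0,0)], ![(0,0), (0,0), (0,0), (0,0), (0,1), (0,0), (0,0), (0,2), (0,0), (1,2), (2,1), (0,0), (2,0), (0,0), (0,0), (1,0), (0,0), (1,1), (0,0), (0,0), (0,0), (0,0), (0,0), (2,2)], ![(0,0), (0,0), (0,0), (0,0), (0,1), (0,0), (0,0), (0,2), (1,2), (0,0), (2,1), (0,0), (0,0), (2,0), (1,0), (0,0), (1,1), (0,0), (0,0), (0,0), (0,0), (0,0), (2,2), (0,0)], ![(0,0), (0,0), (0,0), (0,0), (0,1), (0,0), (0,2), (0,0), (0,0), (1,2), (0,0), (2,1), (2,0), (0,0), (1,0), (0,0), (0,0), (0,0), (0,0), (1,1), (0,0), (2,2), (0,0), (0,0)], ![(0,0), (0,0), (0,0), (0,0), (0,1), (0,0), (0,2), (0,0), (1,2), (0,0), (0,0), (2,1), (0,0), (2,0), (0,0), (1,0), (0,0), (0,0), (1,1), (0,0), (2,2), (0,0), (0,0), (0,0)]]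

def Einv0 : Fin 24 → Fin 3 → Fin 3 → Fin 24 :=
  ![![![1, 10, 12], ![11, 2, 14], ![13, 15, 3]], ![![0, 6, 8], ![7, 2, 14], ![9, 15, 3]], ![![0, 4, 8], ![5, 1, 12], ![9, 13, 3]], ![![0, 4, 6], ![5, 1, 10], ![7, 11, 2]], ![![14, 2, 20], ![3, 15, 21], ![23, 22, 5]], ![![14, 2, 16], ![3, 15, 17], ![19, 18, 4]], ![![12, 1, 18], ![3, 13, 19], ![23, 22, 7]], ![![12, 1, 16], ![3, 13, 17], ![21, 20, 6]], ![![10, 1, 17], ![2, 11, 19], ![23, 21, 9]], ![![10, 1, 16], ![2, 11, 18], ![22, 20, 8]], ![![8, 0, 18], ![3, 9, 19], ![20, 21, 11]], ![![8, 0, 16], ![3, 9, 17], ![22, 23, 10]], ![![6, 0, 17], ![2, 7, 19], ![20, 22, 13]], ![![6, 0, 16], ![2, 7, 18], ![21, 23, 12]], ![![4, 0, 17], ![1, 5, 21], ![18, 22, 15]], ![![4, 0, 16], ![1, 5, 20], ![19, 23, 14]], ![![22, 5, 7], ![15, 21, 9], ![13, 11, 19]], ![![23, 5, 7], ![14, 20,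 8], ![12, 11, 18]], ![![20, 5, 6], ![14, 23, 9], ![13, 10, 17]], ![![21, 5, 6], ![15, 22, 8], ![12, 10, 16]], ![![18, 4, 7], ![15, 17, 9], ![12, 10, 23]], ![![19, 4, 7], ![14, 16, 8], ![13, 10, 22]], ![![16, 4, 6], ![14, 19, 9], ![12, 11, 21]], ![![17, 4, 6], ![15, 18, 8], ![13, 11, 20]]]

def par0 : Fin 24 → Fin 24 :=
  ![0, 0, 0, 0, 2, 2, 1, 1, 1, 1, 0, 0, 0, 0, 0, 0, 11, 11, 10, 10, 10, 10, 11, 11]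

def dep0 : Fin 24 → ℕ :=
  ![0, 1, 1, 1, 2, 2, 2, 2, 2, 2, 1, 1, 1, 1, 1, 1, 2, 2, 2, 2, 2, 2, 2, 2]

def pv0 : Fin 24 → ℤ :=
  ![0, 0, 1, 1, 1, 1, 1, 1, 1, 1, 1, 1, 1, 1, 0, 0, 1, 1, 1, 1, 1, 1, 1, 1]


instance graphB3.adjDecidable : DecidableRel graphB3.Adj := fun a b =>
  decidable_of_iff (a ≠ b ∧
    ((({a.1, a.2} : Finset (Fin 3)) ∩ {b.1, b.2} = ∅ ∨ b = (a.2, a.1)) ∨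
     (({b.1, b.2} : Finset (Fin 3)) ∩ {a.1, a.2} = ∅ ∨ a = (b.2, b.1)))) Iff.rfl

lemma hAsymm : ∀ v w, A0 v w = A0 w v := by decide
lemma hAirr : ∀ v, A0 v v = false := by decide
lemma hganti : ∀ v w, g0 v w = -(g0 w v) := by decide
lemma htri : ∀ u v w, A0 u v = true → A0 v w = true → A0 u w = true →
    g0 u v + g0 v w = g0 u w := by decide
lemma check1 : ∀ v w, A0 v w = true → Einv0 v (E0 v w).1 (E0 v w).2 = w := by decide
lemma check2 : ∀ (v : Fin 24) (p : Fin 3 × Fin 3),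
    A0 v (Einv0 v p.1 p.2) = true ∧ E0 v (Einv0 v p.1 p.2) = p := by decide
lemma check3 : ∀ v w w', A0 v w = true → A0 v w' = true →
    (A0 w w' = true ↔ graphB3.Adj (E0 v w) (E0 v w')) := by decide
lemma check4 : ∀ v w, A0 v w = true →
    lab0 w = (if lab0 v then labelB3 (E0 v w) else !labelB3 (E0 v w)) := by decide
lemma hdep0 : ∀ v : Fin 24, dep0 v = 0 → v = 0 := by decide
lemma htree : ∀ v : Fin 24, v ≠ 0 → A0 (par0 v) v = true ∧ dep0 (par0 v) < dep0 v ∧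
    pv0 v = pv0 (par0 v) + g0 (par0 v) v := by decide
lemma hdep_le : ∀ v : Fin 24, dep0 v ≤ 24 := by decide

lemma hpv_zero : pv0 0 = 0 := by decide
lemma hspecial : A0 4 14 = true ∧ pv0 4 + g0 4 14 = 1 + pv0 14 := by decide

variable (n : ℕ)

/-- The voltage cover of the `F₄` reflection graph with fibers `ZMod (n+1)`. -/
def GG : SimpleGraph (Fin 24 × ZMod (n + 1)) where
  Adj x y := A0 x.1 y.1 = true ∧ y.2 - x.2 = (g0 x.1 y.1 : ZMod (n + 1))
  symm := by
    constructor
    rintro ⟨v, a⟩ ⟨w, b⟩ ⟨h1, h2⟩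
    refine ⟨by rw [hAsymm]; exact h1, ?_⟩
    have : g0 w v = -(g0 v w) := by rw [hganti]
    rw [this]
    push_cast
    rw [← h2]
    ring
  loopless := by
    constructor
    rintro ⟨v, a⟩ ⟨h1, _⟩
    rw [hAirr] at h1
    exact Bool.false_ne_true h1

lemma GG_adj {x y : Fin 24 × ZMod (n + 1)} :
    (GG n).Adj x y ↔ A0 x.1 y.1 = true ∧ y.2 - x.2 = (g0 x.1 y.1 : ZMod (n + 1)) := Iff.rfl

/-- The equivalence between the neighborhood of a vertex in the cover and `Fin 3 × Fin 3`. -/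
def nbhdEquiv (x : Fin 24 × ZMod (n + 1)) :
    (GG n).neighborSet x ≃ (Fin 3 × Fin 3) where
  toFun y := E0 x.1 y.1.1
  invFun p := ⟨(Einv0 x.1 p.1 p.2, x.2 + (g0 x.1 (Einv0 x.1 p.1 p.2) : ZMod (n + 1))),
    ⟨(check2 x.1 p).1, by ring⟩⟩
  left_inv := by
    rintro ⟨⟨w, b⟩, hw, hb⟩
    have h1 : Einv0 x.1 (E0 x.1 w).1 (E0 x.1 w).2 = w := check1 x.1 w hw
    apply Subtype.ext
    dsimp only
    rw [h1]
    exact Prod.ext rfl (by rw [← hb]; ring)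
  right_inv := fun p => (check2 x.1 p).2

/-- The neighborhood of any vertex of the cover is isomorphic to `graphB3`. -/
def nbhdIso (x : Fin 24 × ZMod (n + 1)) :
    (GG n).induce ((GG n).neighborSet x) ≃g graphB3 where
  toEquiv := nbhdEquiv n x
  map_rel_iff' := by
    rintro ⟨⟨w, b⟩, hw, hb⟩ ⟨⟨w', b'⟩, hw', hb'⟩
    show graphB3.Adj (E0 x.1 w) (E0 x.1 w') ↔ (GG n).Adj (w, b) (w', b')
    constructor
    · intro h
      have hA : A0 w w' = true := (check3 x.1 w w' hw hw').2 h
      refine ⟨hA, ?_⟩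
      have ht : g0 x.1 w + g0 w w' = g0 x.1 w' := htri x.1 w w' hw hA hw'
      have : (g0 w w' : ZMod (n + 1)) = (g0 x.1 w' : ZMod (n + 1)) - g0 x.1 w := by
        rw [← ht]; push_cast; ring
      rw [this, ← hb, ← hb']
      ring
    · intro h
      exact (check3 x.1 w w' hw hw').1 h.1

/-- The labeling of the cover. -/
def labU (x : Fin 24 × ZMod (n + 1)) : Bool := lab0 x.1

lemma hlocal : IsLocallyLikeWF4 (GG n) (labU n) := by
  constructor
  · intro x hx
    refine ⟨nbhdIso n x, fun u => ?_⟩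
    have h4 := check4 x.1 u.1.1 u.2.1
    rw [labU] at hx
    rw [hx, if_pos rfl] at h4
    exact h4
  · intro x hx
    refine ⟨nbhdIso n x, fun u => ?_⟩
    have h4 := check4 x.1 u.1.1 u.2.1
    rw [labU] at hx
    rw [hx] at h4
    simp at h4
    exact h4

lemma reach_aux : ∀ (k : ℕ) (v : Fin 24), dep0 v ≤ k → ∀ c : ZMod (n + 1),
    (GG n).Reachable ((0 : Fin 24), c) (v, c + (pv0 v : ZMod (n + 1))) := by
  intro k
  induction k with
  | zero =>
    intro v hv c
    have hv0 : v = 0 := hdep0 v (Nat.le_zero.mp hv)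
    subst hv0
    rw [hpv_zero]
    push_cast
    rw [add_zero]
  | succ k ih =>
    intro v hv c
    by_cases hv0 : v = 0
    · subst hv0
      rw [hpv_zero]
      push_cast
      rw [add_zero]
    · obtain ⟨hA, hd, hp⟩ := htree v hv0
      have h1 : (GG n).Reachable ((0 : Fin 24), c) (par0 v, c + (pv0 (par0 v) : ZMod (n + 1))) :=
        ih (par0 v) (by omega) c
      refine h1.trans (SimpleGraph.Adj.reachable ⟨hA, ?_⟩)
      rw [hp]
      push_cast
      ring

lemma reach_shift (c : ZMod (n + 1)) :
    (GG n).Reachable ((0 : Fin 24), c) ((0 : Fin 24), c + 1) := by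
  obtain ⟨hA, hsp⟩ := hspecial
  have h1 := reach_aux n 24 4 (hdep_le 4) c
  have h2 : (GG n).Adj ((4 : Fin 24), c + (pv0 4 : ZMod (n + 1)))
      ((14 : Fin 24), c + 1 + (pv0 14 : ZMod (n + 1))) := by
    refine ⟨hA, ?_⟩
    have : (pv0 4 : ZMod (n+1)) + (g0 4 14 : ZMod (n+1)) = 1 + (pv0 14 : ZMod (n+1)) := by
      have := congrArg (fun z : ℤ => (z : ZMod (n+1))) hsp
      push_cast at this
      linear_combination this
    linear_combination -this
  have h3 := (reach_aux n 24 14 (hdep_le 14) (c + 1)).symm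
  exact (h1.trans h2.reachable).trans h3

lemma reach_fiber : ∀ c : ZMod (n + 1),
    (GG n).Reachable ((0 : Fin 24), 0) ((0 : Fin 24), c) := by
  have key : ∀ k : ℕ, (GG n).Reachable ((0 : Fin 24), 0) ((0 : Fin 24), (k : ZMod (n + 1))) := by
    intro k
    induction k with
    | zero =>
      push_cast
      rfl
    | succ k ih =>
      push_cast
      exact ih.trans (reach_shift n ((k : ZMod (n + 1))))
  intro c
  have hc : ((c.val : ℕ) : ZMod (n + 1)) = c := ZMod.natCast_rightInverse c
  rw [← hc]
  exact key c.val

lemma GG_connected : (GG n).Connected := by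
  have hz : ∀ z : Fin 24 × ZMod (n + 1), (GG n).Reachable ((0 : Fin 24), 0) z := by
    rintro ⟨v, b⟩
    have h1 := reach_fiber n (b - (pv0 v : ZMod (n + 1)))
    have h2 := reach_aux n 24 v (hdep_le v) (b - (pv0 v : ZMod (n + 1)))
    have h3 : b - (pv0 v : ZMod (n + 1)) + (pv0 v : ZMod (n + 1)) = b := by ring
    rw [h3] at h2
    exact h1.trans h2
  have : Nonempty (Fin 24 × ZMod (n + 1)) := ⟨((0 : Fin 24), 0)⟩
  exact ⟨fun x y => (hz x).symm.trans (hz y)⟩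

/-- Transfer of the local property along a graph isomorphism. -/
lemma isLocallyLikeWF4_of_iso {V W : Type*} {G : SimpleGraph V} {G' : SimpleGraph W}
    (f : G ≃g G') (lab : V → Bool) (h : IsLocallyLikeWF4 G lab) :
    IsLocallyLikeWF4 G' (fun w => lab (f.symm w)) := by
  have key : ∀ x : W,
      ∃ k : G'.induce (G'.neighborSet x) ≃g G.induce (G.neighborSet (f.symm x)),
        ∀ u : G'.neighborSet x, ((k u : V) : V) = f.symm u.1 := by
    intro x
    refine ⟨⟨f.symm.mapNeighborSet x, ?_⟩, fun u => rfl⟩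
    intro a b
    exact f.symm.map_rel_iff
  constructor
  · intro x hx
    obtain ⟨k, hk⟩ := key x
    obtain ⟨e, he⟩ := h.1 (f.symm x) hx
    refine ⟨k.trans e, fun u => ?_⟩
    have := he (k u)
    rw [hk u] at this
    exact this
  · intro x hx
    obtain ⟨k, hk⟩ := key x
    obtain ⟨e, he⟩ := h.2 (f.symm x) hx
    refine ⟨k.trans e, fun u => ?_⟩
    have := he (k u)
    rw [hk u] at this
    exact this

end Construction

/-- For every natural number `N` there exists a finite connected bichromatic
graph that is locally like `W(F₄)` and has more than `N` vertices; in particular, there are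
infinitely many pairwise non-isomorphic finite connected bichromatic graphs locally like
`W(F₄)`. -/
theorem stmt_18 :
    ∀ N : ℕ, ∃ (m : ℕ) (Γ : SimpleGraph (Fin m)) (lab : Fin m → Bool),
      N < m ∧ Γ.Connected ∧ IsLocallyLikeWF4 Γ lab := by
  intro N
  have hcard : Fintype.card (Fin 24 × ZMod (N + 1)) = 24 * (N + 1) := by
    rw [Fintype.card_prod, Fintype.card_fin, ZMod.card]
  let f : (Fin 24 × ZMod (N + 1)) ≃ Fin (24 * (N + 1)) := Fintype.equivFinOfCardEq hcard
  let ι := SimpleGraph.Iso.comap f.symm (GG N)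
  refine ⟨24 * (N + 1), (GG N).comap f.symm.toEmbedding,
    fun w => labU N (ι.symm.symm w), by omega, ?_, ?_⟩
  · exact (SimpleGraph.Iso.connected_iff ι).mpr (GG_connected N)
  · exact isLocallyLikeWF4_of_iso ι.symm (labU N) (hlocal N)
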